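/- Pointwise layer bound for the singular component: Let w = (w₁,…,wₙ) be in the domain of L with Lw = 0 on Ω, w_i(x,0) = 0 for all i and all x ∈ [0,1], and suppose that for some K ≥ 0 one has |(β₀w)_i(0,t)| ≤ K and |(β₁w)_i(1,t)| ≤ K for all i and all t ∈ [0,T]. Then for all i = 1,…,n and all (x,t) ∈ Ω̄: |w_i(x,t)| ≤ K e^{αt} Bₙ(x), where Bₙ(x) = exp(−x√(α/εₙ)) + exp(−(1−x)√(α/εₙ)). -/

import Mathlib

/-- The layer function `B_r` associated with the parameter `e` (= `ε_r`):
`B_r(x) = exp(-x√(α/ε_r)) + exp(-(1-x)√(α/ε_r))`. -/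
noncomputable def layerB (α e x : ℝ) : ℝ :=
  Real.exp (-x * Real.sqrt (α / e)) + Real.exp (-(1 - x) * Real.sqrt (α / e))

open Set Filter Topology

noncomputable def Bfun (s x : ℝ) : ℝ := Real.exp (-x * s) + Real.exp (-(1 - x) * s)

noncomputable def Bfun' (s x : ℝ) : ℝ :=
  Real.exp (-x * s) * (-s) + Real.exp (-(1 - x) * s) * s

lemma Bfun_pos (s x : ℝ) : 0 < Bfun s x := by
  unfold Bfun; positivity

lemma Bfun_continuous (s : ℝ) : Continuous (Bfun s) := by
  unfold Bfun; fun_prop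

lemma hasDerivAt_Bfun (s x : ℝ) : HasDerivAt (Bfun s) (Bfun' s x) x := by
  have h1 : HasDerivAt (fun y : ℝ => -y * s) (-s) x := by
    simpa using ((hasDerivAt_id x).neg.mul_const s)
  have h2 : HasDerivAt (fun y : ℝ => -(1 - y) * s) s x := by
    have : (fun y : ℝ => -(1 - y) * s) = fun y : ℝ => y * s - 1 * s := by
      funext y; ring
    rw [this]
    simpa using ((hasDerivAt_id x).mul_const s).sub_const (1 * s)
  exact h1.exp.add h2.exp

lemma hasDerivAt_Bfun' (s x : ℝ) : HasDerivAt (Bfun' s) (s * s * Bfun s x) x := by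
  have h1 : HasDerivAt (fun y : ℝ => -y * s) (-s) x := by
    simpa using ((hasDerivAt_id x).neg.mul_const s)
  have h2 : HasDerivAt (fun y : ℝ => -(1 - y) * s) s x := by
    have : (fun y : ℝ => -(1 - y) * s) = fun y : ℝ => y * s - 1 * s := by
      funext y; ring
    rw [this]
    simpa using ((hasDerivAt_id x).mul_const s).sub_const (1 * s)
  have h : HasDerivAt (Bfun' s)
      (Real.exp (-x * s) * (-s) * (-s) + Real.exp (-(1 - x) * s) * s * s) x :=
    (h1.exp.mul_const (-s)).add (h2.exp.mul_const s)
  convert h using 1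
  unfold Bfun; ring

lemma Bfun'_zero_nonpos {s : ℝ} (hs : 0 ≤ s) : Bfun' s 0 ≤ 0 := by
  unfold Bfun'
  have h1 : Real.exp (-(1 - 0) * s) ≤ 1 := by
    rw [Real.exp_le_one_iff]; nlinarith
  nlinarith [Real.exp_pos (-(1-0)*s), Real.exp_pos ((-0)*s),
    (by norm_num : Real.exp (-(0:ℝ) * s) = 1)]

lemma Bfun'_one_nonneg {s : ℝ} (hs : 0 ≤ s) : 0 ≤ Bfun' s 1 := by
  unfold Bfun'
  have h1 : Real.exp (-1 * s) ≤ 1 := by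
    rw [Real.exp_le_one_iff]; nlinarith
  nlinarith [Real.exp_pos ((-1:ℝ)*s),
    (by norm_num : Real.exp (-((1:ℝ) - 1) * s) = 1)]

lemma Bfun_zero_ge_one (s : ℝ) : 1 ≤ Bfun s 0 := by
  unfold Bfun
  nlinarith [Real.exp_pos (-(1-0)*s), (by norm_num : Real.exp (-(0:ℝ) * s) = 1)]

lemma Bfun_one_ge_one (s : ℝ) : 1 ≤ Bfun s 1 := by
  unfold Bfun
  nlinarith [Real.exp_pos ((-1:ℝ)*s), (by norm_num : Real.exp (-((1:ℝ)-1) * s) = 1)]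

lemma layerB_eq_Bfun (α e x : ℝ) : layerB α e x = Bfun (Real.sqrt (α / e)) x := rfl

lemma deriv_nonneg_of_min_left {f : ℝ → ℝ} {f' a b : ℝ} (hab : a < b)
    (hf : HasDerivWithinAt f f' (Set.Icc a b) a)
    (hmin : ∀ y ∈ Set.Icc a b, f a ≤ f y) : 0 ≤ f' := by
  have hf' : HasDerivWithinAt f f' (Set.Ioo a b) a := hf.mono Set.Ioo_subset_Icc_self
  rw [hasDerivWithinAt_iff_tendsto_slope,
    Set.diff_singleton_eq_self (by simp)] at hf'
  have : NeBot (𝓝[Set.Ioo a b] a) := left_nhdsWithin_Ioo_neBot hab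
  refine ge_of_tendsto hf' ?_
  filter_upwards [self_mem_nhdsWithin] with y hy
  rw [slope_def_field]
  have h1 : f a ≤ f y := hmin y (Set.Ioo_subset_Icc_self hy)
  have h2 : a < y := hy.1
  exact div_nonneg (by linarith) (by linarith)

lemma deriv_nonpos_of_min_right {f : ℝ → ℝ} {f' a b c : ℝ} (hc : c ∈ Set.Ioc a b)
    (hf : HasDerivWithinAt f f' (Set.Icc a b) c)
    (hmin : ∀ y ∈ Set.Icc a b, f c ≤ f y) : f' ≤ 0 := by
  have hsub : Set.Ioo a c ⊆ Set.Icc a b := fun y hy =>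
    ⟨le_of_lt hy.1, le_trans (le_of_lt hy.2) hc.2⟩
  have hf' : HasDerivWithinAt f f' (Set.Ioo a c) c := hf.mono hsub
  rw [hasDerivWithinAt_iff_tendsto_slope,
    Set.diff_singleton_eq_self (by simp)] at hf'
  have : NeBot (𝓝[Set.Ioo a c] c) := right_nhdsWithin_Ioo_neBot hc.1
  refine le_of_tendsto hf' ?_
  filter_upwards [self_mem_nhdsWithin] with y hy
  rw [slope_def_field]
  have h1 : f c ≤ f y := hmin y (hsub hy)
  have h2 : y < c := hy.2
  exact div_nonpos_of_nonneg_of_nonpos (by linarith) (by linarith)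

lemma second_deriv_nonneg_of_min {f f' : ℝ → ℝ} {a b x f'' : ℝ} (hx : x ∈ Set.Ioo a b)
    (hf : ∀ y ∈ Set.Ioo a b, HasDerivAt f (f' y) y)
    (hf'' : HasDerivAt f' f'' x)
    (hmin : ∀ y ∈ Set.Ioo a b, f x ≤ f y) : 0 ≤ f'' := by
  have hloc : IsLocalMin f x :=
    Filter.eventually_of_mem (Ioo_mem_nhds hx.1 hx.2) hmin
  have h0 : f' x = 0 := hloc.hasDerivAt_eq_zero (hf x hx)
  by_contra hcon
  push_neg at hcon
  have hslope : Tendsto (slope f' x) (𝓝[≠] x) (𝓝 f'') :=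
    hasDerivAt_iff_tendsto_slope.1 hf''
  have ev : ∀ᶠ y in 𝓝[≠] x, slope f' x y < 0 :=
    hslope.eventually (gt_mem_nhds hcon)
  have ev' : ∀ᶠ y in 𝓝[<] x, slope f' x y < 0 :=
    ev.filter_mono (nhdsWithin_mono x (fun y hy => ne_of_lt hy))
  obtain ⟨l, hl, hIoo⟩ := (mem_nhdsLT_iff_exists_Ioo_subset' hx.1).1 ev'
  set y₀ : ℝ := max l ((a + x) / 2) with hy₀def
  have hy₀x : y₀ < x := max_lt hl (by linarith [hx.1])
  have hay₀ : a < y₀ := lt_of_lt_of_le (by linarith [hx.1]) (le_max_right _ _)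
  have hpos : ∀ y ∈ Set.Ioo y₀ x, 0 < f' y := by
    intro y hy
    have hyl : y ∈ Set.Ioo l x := ⟨lt_of_le_of_lt (le_max_left _ _) hy.1, hy.2⟩
    have hs := hIoo hyl
    rw [Set.mem_setOf_eq, slope_def_field, h0, sub_zero] at hs
    have hyx : y - x < 0 := by linarith [hy.2]
    rcases div_neg_iff.1 hs with ⟨h1, _⟩ | ⟨_, h2⟩
    · exact h1
    · linarith
  have hsubIoo : Set.Icc y₀ x ⊆ Set.Ioo a b := fun y hy =>
    ⟨lt_of_lt_of_le hay₀ hy.1, lt_of_le_of_lt hy.2 hx.2⟩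
  have hcont : ContinuousOn f (Set.Icc y₀ x) := fun y hy =>
    (hf y (hsubIoo hy)).continuousAt.continuousWithinAt
  obtain ⟨c, hc, hcslope⟩ := exists_hasDerivAt_eq_slope f f' hy₀x hcont
    (fun y hy => hf y (hsubIoo (Set.Ioo_subset_Icc_self hy)))
  have hc0 : 0 < f' c := hpos c hc
  have hxy₀ : 0 < x - y₀ := by linarith
  have : f y₀ < f x := by
    have := hcslope
    rw [eq_div_iff (ne_of_gt hxy₀)] at this
    nlinarith
  have hy₀mem : y₀ ∈ Set.Ioo a b := ⟨hay₀, lt_trans hy₀x hx.2⟩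
  linarith [hmin y₀ hy₀mem]

lemma aux_bound
    (n : ℕ) (T : ℝ) (hT : 0 < T)
    (ε : Fin (n + 1) → ℝ)
    (hε0 : ∀ i, 0 < ε i) (hεle : ∀ i, ε i ≤ ε (Fin.last n))
    (a : Fin (n + 1) → Fin (n + 1) → ℝ → ℝ → ℝ)
    (ha_off : ∀ i j, i ≠ j → ∀ x ∈ Set.Icc (0:ℝ) 1, ∀ t ∈ Set.Icc (0:ℝ) T,
      a i j x t ≤ 0)
    (α : ℝ) (hα0 : 0 < α)
    (hα : ∀ i, ∀ x ∈ Set.Icc (0:ℝ) 1, ∀ t ∈ Set.Icc (0:ℝ) T, α < ∑ j, a i j x t)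
    (w wx wt wxx : Fin (n + 1) → ℝ → ℝ → ℝ)
    (hw_cont : ∀ i, ContinuousOn (fun p : ℝ × ℝ => w i p.1 p.2)
      (Set.Icc 0 1 ×ˢ Set.Icc 0 T))
    (hwx : ∀ i, ∀ t ∈ Set.Icc (0:ℝ) T, ∀ x ∈ Set.Icc (0:ℝ) 1,
      HasDerivWithinAt (fun y => w i y t) (wx i x t) (Set.Icc 0 1) x)
    (hwt : ∀ i, ∀ x ∈ Set.Ioo (0:ℝ) 1, ∀ t ∈ Set.Ioc (0:ℝ) T,
      HasDerivWithinAt (fun s => w i x s) (wt i x t) (Set.Icc 0 T) t)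
    (hwxx : ∀ i, ∀ t ∈ Set.Ioc (0:ℝ) T, ∀ x ∈ Set.Ioo (0:ℝ) 1,
      HasDerivWithinAt (fun y => wx i y t) (wxx i x t) (Set.Ioo 0 1) x)
    (hLw : ∀ i, ∀ x ∈ Set.Ioo (0:ℝ) 1, ∀ t ∈ Set.Ioc (0:ℝ) T,
      wt i x t - ε i * wxx i x t + ∑ j, a i j x t * w j x t = 0)
    (hinit : ∀ i, ∀ x ∈ Set.Icc (0:ℝ) 1, w i x 0 = 0)
    (K : ℝ) (hK : 0 ≤ K)
    (hb0 : ∀ i, ∀ t ∈ Set.Icc (0:ℝ) T,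
      w i 0 t - Real.sqrt (ε i) * wx i 0 t ≤ K)
    (hb1 : ∀ i, ∀ t ∈ Set.Icc (0:ℝ) T,
      w i 1 t + Real.sqrt (ε i) * wx i 1 t ≤ K) :
    ∀ i, ∀ x ∈ Set.Icc (0:ℝ) 1, ∀ t ∈ Set.Icc (0:ℝ) T,
      w i x t ≤ K * Real.exp (α * t) * layerB α (ε (Fin.last n)) x := by
  classical
  set en : ℝ := ε (Fin.last n) with hen_def
  have hen : 0 < en := hε0 _
  set s : ℝ := Real.sqrt (α / en) with hs_def
  have hs0 : 0 ≤ s := Real.sqrt_nonneg _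
  have hs2 : s * s = α / en := Real.mul_self_sqrt (by positivity)
  set D : Set (ℝ × ℝ) := Set.Icc (0:ℝ) 1 ×ˢ Set.Icc (0:ℝ) T with hD_def
  have hDc : IsCompact D := isCompact_Icc.prod isCompact_Icc
  have hDne : D.Nonempty := ⟨(0, 0), by
    refine ⟨?_, ?_⟩ <;> simp [hT.le]⟩
  set φ : Fin (n + 1) → ℝ × ℝ → ℝ :=
    fun i p => K * Real.exp (α * p.2) * Bfun s p.1 - w i p.1 p.2 with hφ_def
  have hφc : ∀ i, ContinuousOn (φ i) D := by
    intro i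
    apply ContinuousOn.sub _ (hw_cont i)
    exact ((continuous_const.mul
      (Real.continuous_exp.comp (continuous_const.mul continuous_snd))).mul
      ((Bfun_continuous s).comp continuous_fst)).continuousOn
  have hne : (Finset.univ : Finset (Fin (n + 1))).Nonempty := Finset.univ_nonempty
  have hmc : ContinuousOn (fun p => Finset.univ.inf' hne (fun j => φ j p)) D :=
    ContinuousOn.finset_inf'_apply hne (fun j _ => hφc j)
  obtain ⟨p, hpD, hpmin⟩ := hDc.exists_isMinOn hDne hmc
  obtain ⟨i0, -, hi0⟩ := Finset.exists_mem_eq_inf' hne (fun j => φ j p)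
  have key : ∀ j, ∀ q ∈ D, φ i0 p ≤ φ j q := by
    intro j q hq
    rw [← hi0]
    exact le_trans ((isMinOn_iff.1 hpmin) q hq)
      (Finset.inf'_le _ (Finset.mem_univ j))
  suffices h0 : 0 ≤ φ i0 p by
    intro i x hx t ht
    have h1 : φ i0 p ≤ φ i (x, t) := key i (x, t) ⟨hx, ht⟩
    have h2 : 0 ≤ K * Real.exp (α * t) * Bfun s x - w i x t := by
      have := le_trans h0 h1
      simpa [hφ_def] using this
    have h3 : layerB α en x = Bfun s x := layerB_eq_Bfun α en x
    rw [h3]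
    linarith
  by_contra hμcon
  push_neg at hμcon
  obtain ⟨x0, t0⟩ := p
  have hx0 : x0 ∈ Set.Icc (0:ℝ) 1 := hpD.1
  have ht0 : t0 ∈ Set.Icc (0:ℝ) T := hpD.2
  set μ : ℝ := φ i0 (x0, t0) with hμ_def
  have hμ : μ < 0 := hμcon
  -- case t0 = 0
  rcases eq_or_lt_of_le ht0.1 with ht0' | ht0'
  · have : μ = K * Real.exp (α * t0) * Bfun s x0 - w i0 x0 t0 := rfl
    rw [← ht0'] at this
    rw [hinit i0 x0 hx0] at this
    have hBp : 0 ≤ K * Real.exp (α * 0) * Bfun s x0 :=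
      mul_nonneg (mul_nonneg hK (Real.exp_pos _).le) (Bfun_pos s x0).le
    linarith
  -- now 0 < t0
  have ht0Ioc : t0 ∈ Set.Ioc 0 T := ⟨ht0', ht0.2⟩
  set c : ℝ := K * Real.exp (α * t0) with hc_def
  have hc0 : 0 ≤ c := mul_nonneg hK (Real.exp_pos _).le
  have hcK : K ≤ c := by
    have h1 : (1:ℝ) ≤ Real.exp (α * t0) := by
      rw [Real.one_le_exp_iff]
      positivity
    nlinarith
  rcases eq_or_lt_of_le hx0.1 with hx0' | hx0'
  · -- x0 = 0
    have hg : HasDerivWithinAt (fun y => φ i0 (y, t0))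
        (c * Bfun' s 0 - wx i0 0 t0) (Set.Icc 0 1) 0 := by
      exact (((hasDerivAt_Bfun s 0).const_mul c).hasDerivWithinAt).sub
        (hwx i0 t0 ht0 0 (by norm_num))
    have hgmin : ∀ y ∈ Set.Icc (0:ℝ) 1, φ i0 ((0:ℝ), t0) ≤ φ i0 (y, t0) := by
      intro y hy
      rw [hx0']
      exact key i0 (y, t0) ⟨hy, ht0⟩
    have hg' : 0 ≤ c * Bfun' s 0 - wx i0 0 t0 :=
      deriv_nonneg_of_min_left zero_lt_one hg hgmin
    have hsq : (0:ℝ) ≤ Real.sqrt (ε i0) := Real.sqrt_nonneg _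
    have hB0 : 1 ≤ Bfun s 0 - Real.sqrt (ε i0) * Bfun' s 0 := by
      nlinarith [Bfun_zero_ge_one s, Bfun'_zero_nonpos hs0,
        mul_nonneg hsq (neg_nonneg.2 (Bfun'_zero_nonpos hs0))]
    have hμeq : μ = c * Bfun s 0 - w i0 0 t0 := by
      rw [hμ_def, ← hx0']
    have hbb := hb0 i0 t0 ht0
    have hKc : K * 1 ≤ c * (Bfun s 0 - Real.sqrt (ε i0) * Bfun' s 0) :=
      mul_le_mul hcK hB0 zero_le_one hc0
    nlinarith [mul_nonneg hsq hg']
  rcases eq_or_lt_of_le hx0.2 with hx1' | hx1'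
  · -- x0 = 1
    have hg : HasDerivWithinAt (fun y => φ i0 (y, t0))
        (c * Bfun' s 1 - wx i0 1 t0) (Set.Icc 0 1) 1 := by
      exact (((hasDerivAt_Bfun s 1).const_mul c).hasDerivWithinAt).sub
        (hwx i0 t0 ht0 1 (by norm_num))
    have hgmin : ∀ y ∈ Set.Icc (0:ℝ) 1, φ i0 ((1:ℝ), t0) ≤ φ i0 (y, t0) := by
      intro y hy
      rw [← hx1']
      exact key i0 (y, t0) ⟨hy, ht0⟩
    have hg' : c * Bfun' s 1 - wx i0 1 t0 ≤ 0 :=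
      deriv_nonpos_of_min_right (by norm_num : (1:ℝ) ∈ Set.Ioc (0:ℝ) 1) hg hgmin
    have hsq : (0:ℝ) ≤ Real.sqrt (ε i0) := Real.sqrt_nonneg _
    have hB1 : 1 ≤ Bfun s 1 + Real.sqrt (ε i0) * Bfun' s 1 := by
      nlinarith [Bfun_one_ge_one s, mul_nonneg hsq (Bfun'_one_nonneg hs0)]
    have hμeq : μ = c * Bfun s 1 - w i0 1 t0 := by
      rw [hμ_def, hx1']
    have hbb := hb1 i0 t0 ht0
    have hKc : K * 1 ≤ c * (Bfun s 1 + Real.sqrt (ε i0) * Bfun' s 1) :=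
      mul_le_mul hcK hB1 zero_le_one hc0
    nlinarith [mul_nonneg hsq (neg_nonneg.2 hg')]
  -- interior case
  have hx0Ioo : x0 ∈ Set.Ioo (0:ℝ) 1 := ⟨hx0', hx1'⟩
  set P : ℝ := c * Bfun s x0 with hP_def
  have hP0 : 0 ≤ P := mul_nonneg hc0 (Bfun_pos s x0).le
  -- time derivative
  have hft : HasDerivWithinAt (fun t => K * Real.exp (α * t) * Bfun s x0 - w i0 x0 t)
      (K * (Real.exp (α * t0) * α) * Bfun s x0 - wt i0 x0 t0) (Set.Icc 0 T) t0 := by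
    have h1 : HasDerivAt (fun t : ℝ => α * t) α t0 := by
      simpa using (hasDerivAt_id t0).const_mul α
    exact (((h1.exp.const_mul K).mul_const (Bfun s x0)).hasDerivWithinAt).sub
      (hwt i0 x0 hx0Ioo t0 ht0Ioc)
  have hfmin : ∀ u ∈ Set.Icc (0:ℝ) T,
      (fun t => K * Real.exp (α * t) * Bfun s x0 - w i0 x0 t) t0
      ≤ (fun t => K * Real.exp (α * t) * Bfun s x0 - w i0 x0 t) u := by
    intro u hu
    exact key i0 (x0, u) ⟨hx0, hu⟩
  have hwt_ge : K * (Real.exp (α * t0) * α) * Bfun s x0 - wt i0 x0 t0 ≤ 0 :=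
    deriv_nonpos_of_min_right ht0Ioc hft hfmin
  have hwt_ge' : α * P ≤ wt i0 x0 t0 := by
    rw [hP_def, hc_def]; nlinarith [hwt_ge]
  -- second space derivative
  have hgd : ∀ y ∈ Set.Ioo (0:ℝ) 1, HasDerivAt (fun y => φ i0 (y, t0))
      (c * Bfun' s y - wx i0 y t0) y := by
    intro y hy
    have hw' : HasDerivAt (fun y => w i0 y t0) (wx i0 y t0) y :=
      (hwx i0 t0 ht0 y (Set.Ioo_subset_Icc_self hy)).hasDerivAt
        (Icc_mem_nhds hy.1 hy.2)
    exact ((hasDerivAt_Bfun s y).const_mul c).sub hw'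
  have hg'' : HasDerivAt (fun y => c * Bfun' s y - wx i0 y t0)
      (c * (s * s * Bfun s x0) - wxx i0 x0 t0) x0 := by
    have hw'' : HasDerivAt (fun y => wx i0 y t0) (wxx i0 x0 t0) x0 :=
      (hwxx i0 t0 ht0Ioc x0 hx0Ioo).hasDerivAt (Ioo_mem_nhds hx0Ioo.1 hx0Ioo.2)
    exact ((hasDerivAt_Bfun' s x0).const_mul c).sub hw''
  have hgmin2 : ∀ y ∈ Set.Ioo (0:ℝ) 1, φ i0 (x0, t0) ≤ φ i0 (y, t0) := by
    intro y hy
    exact key i0 (y, t0) ⟨Set.Ioo_subset_Icc_self hy, ht0⟩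
  have hxx : 0 ≤ c * (s * s * Bfun s x0) - wxx i0 x0 t0 :=
    second_deriv_nonneg_of_min hx0Ioo hgd hg'' hgmin2
  have hwxx_le : ε i0 * wxx i0 x0 t0 ≤ α * P := by
    have h1 : wxx i0 x0 t0 ≤ (α / en) * P := by
      rw [hP_def]
      nlinarith [hxx, hs2]
    have h2 : ε i0 * wxx i0 x0 t0 ≤ ε i0 * ((α / en) * P) :=
      mul_le_mul_of_nonneg_left h1 (hε0 i0).le
    have h3 : ε i0 * ((α / en) * P) ≤ en * ((α / en) * P) :=
      mul_le_mul_of_nonneg_right (hεle i0) (by positivity)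
    have h4 : en * ((α / en) * P) = α * P := by
      field_simp
    linarith
  -- sum estimate
  set A : ℝ := ∑ j, a i0 j x0 t0 with hA_def
  have hA : α < A := hα i0 x0 hx0 t0 ht0
  have hsum : A * P - A * μ ≤ ∑ j, a i0 j x0 t0 * w j x0 t0 := by
    have hterm : ∀ j ∈ Finset.univ, a i0 j x0 t0 * φ j (x0, t0) ≤ a i0 j x0 t0 * μ := by
      intro j _
      rcases eq_or_ne j i0 with rfl | hj
      · rw [← hμ_def]
      · have ha' : a i0 j x0 t0 ≤ 0 := ha_off i0 j (Ne.symm hj) x0 hx0 t0 ht0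
        have hφj : μ ≤ φ j (x0, t0) := key j (x0, t0) hpD
        exact mul_le_mul_of_nonpos_left hφj ha'
    have hsum1 : ∑ j, a i0 j x0 t0 * φ j (x0, t0) ≤ A * μ := by
      rw [hA_def, Finset.sum_mul]
      exact Finset.sum_le_sum hterm
    have hsum2 : ∑ j, a i0 j x0 t0 * w j x0 t0
        = A * P - ∑ j, a i0 j x0 t0 * φ j (x0, t0) := by
      rw [hA_def, Finset.sum_mul, ← Finset.sum_sub_distrib]
      apply Finset.sum_congr rfl
      intro j _
      have : φ j (x0, t0) = P - w j x0 t0 := rfl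
      rw [this]; ring
    linarith
  have hE := hLw i0 x0 hx0Ioo t0 ht0Ioc
  have hPμ : 0 < A * (P - μ) := mul_pos (lt_trans hα0 hA) (by linarith)
  have hexp : A * (P - μ) = A * P - A * μ := by ring
  linarith

/- STATEMENT 8: Pointwise layer bound for the singular component `w`. -/
theorem stmt_8
    (n : ℕ) (T : ℝ) (hT : 0 < T)
    (ε : Fin (n + 1) → ℝ)
    (hε0 : ∀ i, 0 < ε i) (hε1 : ∀ i, ε i < 1) (hεm : StrictMono ε)
    (a : Fin (n + 1) → Fin (n + 1) → ℝ → ℝ → ℝ)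
    (ha_cont : ∀ i j, ContinuousOn (fun p : ℝ × ℝ => a i j p.1 p.2)
      (Set.Icc 0 1 ×ˢ Set.Icc 0 T))
    (ha_diag : ∀ i, ∀ x ∈ Set.Icc (0:ℝ) 1, ∀ t ∈ Set.Icc (0:ℝ) T,
      ∑ j ∈ Finset.univ.erase i, |a i j x t| < a i i x t)
    (ha_off : ∀ i j, i ≠ j → ∀ x ∈ Set.Icc (0:ℝ) 1, ∀ t ∈ Set.Icc (0:ℝ) T,
      a i j x t ≤ 0)
    (α : ℝ) (hα0 : 0 < α)
    (hα : ∀ i, ∀ x ∈ Set.Icc (0:ℝ) 1, ∀ t ∈ Set.Icc (0:ℝ) T, α < ∑ j, a i j x t)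
    (w wx wt wxx : Fin (n + 1) → ℝ → ℝ → ℝ)
    -- w is in the domain of L :
    (hw_cont : ∀ i, ContinuousOn (fun p : ℝ × ℝ => w i p.1 p.2)
      (Set.Icc 0 1 ×ˢ Set.Icc 0 T))
    (hwx_cont : ∀ i, ContinuousOn (fun p : ℝ × ℝ => wx i p.1 p.2)
      (Set.Icc 0 1 ×ˢ Set.Icc 0 T))
    (hwx : ∀ i, ∀ t ∈ Set.Icc (0:ℝ) T, ∀ x ∈ Set.Icc (0:ℝ) 1,
      HasDerivWithinAt (fun y => w i y t) (wx i x t) (Set.Icc 0 1) x)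
    (hwt : ∀ i, ∀ x ∈ Set.Ioo (0:ℝ) 1, ∀ t ∈ Set.Ioc (0:ℝ) T,
      HasDerivWithinAt (fun s => w i x s) (wt i x t) (Set.Icc 0 T) t)
    (hwxx : ∀ i, ∀ t ∈ Set.Ioc (0:ℝ) T, ∀ x ∈ Set.Ioo (0:ℝ) 1,
      HasDerivWithinAt (fun y => wx i y t) (wxx i x t) (Set.Ioo 0 1) x)
    (hwt_cont : ∀ i, ContinuousOn (fun p : ℝ × ℝ => wt i p.1 p.2)
      (Set.Ioo 0 1 ×ˢ Set.Ioc 0 T))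
    (hwxx_cont : ∀ i, ContinuousOn (fun p : ℝ × ℝ => wxx i p.1 p.2)
      (Set.Ioo 0 1 ×ˢ Set.Ioc 0 T))
    -- L w = 0 on Ω and w(x,0) = 0 :
    (hLw : ∀ i, ∀ x ∈ Set.Ioo (0:ℝ) 1, ∀ t ∈ Set.Ioc (0:ℝ) T,
      wt i x t - ε i * wxx i x t + ∑ j, a i j x t * w j x t = 0)
    (hinit : ∀ i, ∀ x ∈ Set.Icc (0:ℝ) 1, w i x 0 = 0)
    -- the Robin boundary values are bounded by K :
    (K : ℝ) (hK : 0 ≤ K)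
    (hb0 : ∀ i, ∀ t ∈ Set.Icc (0:ℝ) T,
      |w i 0 t - Real.sqrt (ε i) * wx i 0 t| ≤ K)
    (hb1 : ∀ i, ∀ t ∈ Set.Icc (0:ℝ) T,
      |w i 1 t + Real.sqrt (ε i) * wx i 1 t| ≤ K) :
    ∀ i, ∀ x ∈ Set.Icc (0:ℝ) 1, ∀ t ∈ Set.Icc (0:ℝ) T,
      |w i x t| ≤ K * Real.exp (α * t) * layerB α (ε (Fin.last n)) x := by
  have hεle : ∀ i, ε i ≤ ε (Fin.last n) := fun i => hεm.monotone (Fin.le_last i)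
  have h1 := aux_bound n T hT ε hε0 hεle a ha_off α hα0 hα w wx wt wxx
    hw_cont hwx hwt hwxx hLw hinit K hK
    (fun i t ht => (abs_le.1 (hb0 i t ht)).2)
    (fun i t ht => (abs_le.1 (hb1 i t ht)).2)
  have h2 := aux_bound n T hT ε hε0 hεle a ha_off α hα0 hα
    (fun i x t => -w i x t) (fun i x t => -wx i x t)
    (fun i x t => -wt i x t) (fun i x t => -wxx i x t)
    (fun i => (hw_cont i).neg)
    (fun i t ht x hx => (hwx i t ht x hx).neg)
    (fun i x hx t ht => (hwt i x hx t ht).neg)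
    (fun i t ht x hx => (hwxx i t ht x hx).neg)
    (fun i x hx t ht => by
      have h := hLw i x hx t ht
      simp only [mul_neg, Finset.sum_neg_distrib]
      linarith)
    (fun i x hx => by simp [hinit i x hx])
    K hK
    (fun i t ht => by
      show -w i 0 t - Real.sqrt (ε i) * -wx i 0 t ≤ K
      have h := (abs_le.1 (hb0 i t ht)).1
      linarith)
    (fun i t ht => by
      show -w i 1 t + Real.sqrt (ε i) * -wx i 1 t ≤ K
      have h := (abs_le.1 (hb1 i t ht)).1
      linarith)
  intro i x hx t ht
  rw [abs_le]
  refine ⟨?_, h1 i x hx t ht⟩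
  have h3 := h2 i x hx t ht
  linarith
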